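/- Every Halin graph has an {L, ⌐}-representation in which exactly one vertex uses a ⌐-shape. Precisely: let T be a finite tree whose leaves are enumerated v_1,…,v_k with k ≥ 3, let r be the unique neighbor of v_k in T, and assume the enumeration is T-planar with respect to r (for every vertex u ≠ r of T, the set {i : u lies on the path in T from v_i to r} is a set of consecutive integers). Let G be the Halin graph obtained from T by adding the cycle edges v_i v_{i+1} for 1 ≤ i < k and the edge v_k v_1. Then there is an assignment v ↦ c(v) of a curve to each vertex of G such that the curve of exactly one vertex is a ⌐-shape and the curve of every other vertex is an L-shape, and for all distinct vertices u, v: c(u) ∩ c(v) ≠ ∅ if and only if u and v are adjacent in G, and c(u) ∩ c(v) contains at most one point. -/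

import Mathlib

/-- An L-shape: a corner at `(x, y)` with one arm extending upward and one arm
extending rightward. -/
def LShape (x y a b : ℝ) : Set (ℝ × ℝ) :=
  ({x} : Set ℝ) ×ˢ Set.Icc y (y + a) ∪ Set.Icc x (x + b) ×ˢ ({y} : Set ℝ)

def IsLShape (c : Set (ℝ × ℝ)) : Prop :=
  ∃ x y a b : ℝ, 0 < a ∧ 0 < b ∧ c = LShape x y a b

/-- A ⌐-shape: a corner at `(x, y)` with one arm extending downward and one arm
extending leftward. -/
def GammaShape (x y a b : ℝ) : Set (ℝ × ℝ) :=
  ({x} : Set ℝ) ×ˢ Set.Icc (y - a) y ∪ Set.Icc (x - b) x ×ˢ ({y} : Set ℝ)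

def IsGammaShape (c : Set (ℝ × ℝ)) : Prop :=
  ∃ x y a b : ℝ, 0 < a ∧ 0 < b ∧ c = GammaShape x y a b

/-- `u` lies on the (unique) path in `T` from `x` to `r`. -/
def OnPath {V : Type*} (T : SimpleGraph V) (u x r : V) : Prop :=
  ∀ p : T.Walk x r, p.IsPath → u ∈ p.support



namespace HalinAux

open SimpleGraph Walk

set_option linter.unusedSectionVars false

variable {V : Type*} [Fintype V] [DecidableEq V] {T : SimpleGraph V} [DecidableRel T.Adj]

noncomputable def pth (hT : T.IsTree) (r x : V) : T.Walk x r :=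
  (hT.existsUnique_path x r).choose

lemma pth_isPath (hT : T.IsTree) (r x : V) : (pth hT r x).IsPath :=
  (hT.existsUnique_path x r).choose_spec.1

lemma pth_unique (hT : T.IsTree) {r x : V} (p : T.Walk x r) (hp : p.IsPath) :
    p = pth hT r x :=
  (hT.existsUnique_path x r).choose_spec.2 p hp

/-- depth -/
noncomputable def dep (hT : T.IsTree) (r x : V) : ℕ := (pth hT r x).length

/-- `anc hT r u x` : `u` is on the path from `x` to `r` (ancestor-or-self). -/
def anc (hT : T.IsTree) (r u x : V) : Prop := u ∈ (pth hT r x).support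

variable (hT : T.IsTree) (r : V)

lemma anc_self (x : V) : anc hT r x x := Walk.start_mem_support _

lemma anc_r (x : V) : anc hT r r x := Walk.end_mem_support _

lemma pth_r : pth hT r r = Walk.nil := (pth_unique hT Walk.nil (by simp)).symm

@[simp] lemma dep_r : dep hT r r = 0 := by simp [dep, pth_r]

lemma dep_eq_zero_iff {x : V} : dep hT r x = 0 ↔ x = r := by
  constructor
  · exact fun h => Walk.eq_of_length_eq_zero h
  · rintro rfl; simp

lemma anc_of_r {u : V} (h : anc hT r u r) : u = r := by
  rw [anc, pth_r] at h; simpa using h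

lemma drop_eq {u x : V} (h : u ∈ (pth hT r x).support) :
    (pth hT r x).dropUntil u h = pth hT r u :=
  pth_unique hT _ ((pth_isPath hT r x).dropUntil h)

lemma anc_support_subset {u x : V} (h : anc hT r u x) :
    (pth hT r u).support ⊆ (pth hT r x).support := by
  rw [← drop_eq hT r h]
  exact Walk.support_dropUntil_subset _ h

lemma anc_trans {w u x : V} (h1 : anc hT r w u) (h2 : anc hT r u x) : anc hT r w x :=
  anc_support_subset hT r h2 h1

lemma dep_split {u x : V} (h : anc hT r u x) :
    dep hT r x = ((pth hT r x).takeUntil u h).length + dep hT r u := by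
  conv_lhs => rw [dep, ← Walk.take_spec (pth hT r x) h]
  rw [Walk.length_append, drop_eq hT r h, dep]

lemma dep_le_of_anc {u x : V} (h : anc hT r u x) : dep hT r u ≤ dep hT r x := by
  rw [dep_split hT r h]; omega

lemma dep_lt_of_anc {u x : V} (h : anc hT r u x) (hne : u ≠ x) :
    dep hT r u < dep hT r x := by
  rw [dep_split hT r h]
  have : ((pth hT r x).takeUntil u h).length ≠ 0 := by
    intro h0
    exact hne (Walk.eq_of_length_eq_zero h0).symm
  omega

lemma eq_of_anc_dep {u x : V} (h : anc hT r u x) (hd : dep hT r u = dep hT r x) : u = x := by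
  by_contra hne
  exact absurd hd (Nat.ne_of_lt (dep_lt_of_anc hT r h hne))

lemma anc_antisymm {u x : V} (h1 : anc hT r u x) (h2 : anc hT r x u) : u = x :=
  eq_of_anc_dep hT r h1 (le_antisymm (dep_le_of_anc hT r h1) (dep_le_of_anc hT r h2))

/-- comparability of two vertices on a common root-path -/
lemma anc_comparable {u z x : V} (hu : anc hT r u x) (hz : anc hT r z x) :
    anc hT r u z ∨ anc hT r z u := by
  rw [anc, Walk.mem_support_iff_exists_append] at hu
  obtain ⟨q, s, hqs⟩ := hu
  have hps : s.IsPath := by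
    have := pth_isPath hT r x; rw [hqs] at this; exact this.of_append_right
  have hs : s = pth hT r u := pth_unique hT s hps
  rw [anc, hqs, Walk.mem_support_append_iff] at hz
  rcases hz with hz | hz
  · -- z on the first segment  q : Walk x u ;  so u on path from z
    left
    rw [Walk.mem_support_iff_exists_append] at hz
    obtain ⟨q1, q2, rfl⟩ := hz
    have : (q2.append s).IsPath := by
      have := pth_isPath hT r x
      rw [hqs, ← Walk.append_assoc] at this
      exact this.of_append_right
    have heq : q2.append s = pth hT r z := pth_unique hT _ this
    rw [anc, ← heq, Walk.mem_support_append_iff]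
    left; exact Walk.end_mem_support _
  · right; rw [anc, ← hs]; exact hz

/-- interior vertices of paths have degree at least 2 -/
lemma two_le_degree_interior {x y z : V} (p : T.Walk x y) (hp : p.IsPath)
    (hz : z ∈ p.support) (hzx : z ≠ x) (hzy : z ≠ y) : 2 ≤ T.degree z := by
  rw [Walk.mem_support_iff_exists_append] at hz
  obtain ⟨q, s, rfl⟩ := hz
  -- q : Walk x z, s : Walk z y, both nonnil
  have hq : q.IsPath := hp.of_append_left
  have hs : s.IsPath := hp.of_append_right
  -- q ends at z coming from some vertex a adjacent to z; s starts to some b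
  obtain ⟨b, hadjb, s', rfl⟩ := Walk.exists_eq_cons_of_ne hzy s
  have hqrev : q.reverse.IsPath := hq.reverse
  obtain ⟨a, hadja, q', hq'⟩ := Walk.exists_eq_cons_of_ne hzx q.reverse
  have hab : a ≠ b := by
    intro h
    subst h
    -- a ∈ q.support and a ∈ s.support beyond z; contradicts nodup of support
    have ha_q : a ∈ q.support := by
      have : a ∈ q.reverse.support := by rw [hq']; simp
      rwa [Walk.support_reverse, List.mem_reverse] at this
    have ha_s : a ∈ (Walk.cons hadjb s').support.tail := by simp
    have := hp.support_nodup
    rw [Walk.support_append, List.nodup_append] at this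
    exact this.2.2 _ ha_q _ ha_s rfl
  -- both a b are neighbors of z
  have h1 : a ∈ T.neighborFinset z := by
    rw [SimpleGraph.mem_neighborFinset]
    exact hadja
  have h2 : b ∈ T.neighborFinset z := by
    rw [SimpleGraph.mem_neighborFinset]; exact hadjb
  have : ({a, b} : Finset V) ⊆ T.neighborFinset z := by
    intro t ht; simp at ht; rcases ht with rfl | rfl <;> assumption
  calc 2 = ({a, b} : Finset V).card := by rw [Finset.card_insert_of_notMem (by simpa using hab), Finset.card_singleton]
  _ ≤ _ := Finset.card_le_card this
  _ = T.degree z := (T.card_neighborFinset_eq_degree z)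

end HalinAux


namespace HalinNum

lemma half_pow_pos (d : ℕ) : 0 < (2⁻¹ : ℝ) ^ d := by positivity

lemma half_pow_le_one (d : ℕ) : (2⁻¹ : ℝ) ^ d ≤ 1 :=
  pow_le_one₀ (by norm_num) (by norm_num)

lemma half_pow_lt_iff {d e : ℕ} : (2⁻¹ : ℝ) ^ e < (2⁻¹ : ℝ) ^ d ↔ d < e :=
  pow_lt_pow_iff_right_of_lt_one₀ (by norm_num) (by norm_num)

lemma half_pow_le_iff {d e : ℕ} : (2⁻¹ : ℝ) ^ e ≤ (2⁻¹ : ℝ) ^ d ↔ d ≤ e := by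
  rw [← not_lt, ← not_lt, half_pow_lt_iff]

lemma key_le {a b : ℕ} {s t : ℝ} (hs : 0 < s) (hs1 : s ≤ 1) (ht : 0 < t) (ht1 : t ≤ 1) :
    (a : ℝ) + s ≤ (b : ℝ) + t ↔ (a < b ∨ (a = b ∧ s ≤ t)) := by
  constructor
  · intro h
    rcases Nat.lt_trichotomy a b with h' | h' | h'
    · exact Or.inl h'
    · exact Or.inr ⟨h', by subst h'; linarith⟩
    · exfalso
      have : (b : ℝ) + 1 ≤ (a : ℝ) := by exact_mod_cast Nat.succ_le_of_lt h'
      linarith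
  · rintro (h | ⟨rfl, h⟩)
    · have : (a : ℝ) + 1 ≤ (b : ℝ) := by exact_mod_cast Nat.succ_le_of_lt h
      linarith
    · linarith

lemma key_lt {a b : ℕ} {s t : ℝ} (hs : 0 < s) (hs1 : s ≤ 1) (ht : 0 < t) (ht1 : t ≤ 1) :
    (a : ℝ) + s < (b : ℝ) + t ↔ (a < b ∨ (a = b ∧ s < t)) := by
  constructor
  · intro h
    rcases Nat.lt_trichotomy a b with h' | h' | h'
    · exact Or.inl h'
    · exact Or.inr ⟨h', by subst h'; linarith⟩
    · exfalso
      have : (b : ℝ) + 1 ≤ (a : ℝ) := by exact_mod_cast Nat.succ_le_of_lt h'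
      linarith
  · rintro (h | ⟨rfl, h⟩)
    · have : (a : ℝ) + 1 ≤ (b : ℝ) := by exact_mod_cast Nat.succ_le_of_lt h
      linarith
    · linarith

open scoped Classical in
lemma cross_inter (x b t l rr h : ℝ) :
    (Set.Icc l rr ×ˢ ({h} : Set ℝ)) ∩ (({x} : Set ℝ) ×ˢ Set.Icc b t) =
      if l ≤ x ∧ x ≤ rr ∧ b ≤ h ∧ h ≤ t then {(x, h)} else ∅ := by
  ext ⟨p, q⟩
  simp only [Set.mem_inter_iff, Set.mem_prod, Set.mem_Icc, Set.mem_singleton_iff]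
  split_ifs with hc
  · simp only [Set.mem_singleton_iff, Prod.mk.injEq]
    constructor
    · rintro ⟨⟨_, h2⟩, h3, _⟩
      exact ⟨h3, h2⟩
    · rintro ⟨rfl, rfl⟩
      exact ⟨⟨⟨hc.1, hc.2.1⟩, rfl⟩, rfl, hc.2.2.1, hc.2.2.2⟩
  · simp only [Set.mem_empty_iff_false, iff_false]
    rintro ⟨⟨h1, h2⟩, h3, h4⟩
    subst h2; subst h3
    exact hc ⟨h1.1, h1.2, h4.1, h4.2⟩

lemma vv_empty {x1 x2 : ℝ} (h : x1 ≠ x2) (A B : Set ℝ) :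
    (({x1} : Set ℝ) ×ˢ A) ∩ (({x2} : Set ℝ) ×ˢ B) = ∅ := by
  apply Set.eq_empty_iff_forall_notMem.mpr
  rintro ⟨p, q⟩ ⟨h1, h2⟩
  simp only [Set.mem_prod, Set.mem_singleton_iff] at h1 h2
  exact h (h1.1.symm.trans h2.1)

lemma hh_empty_ne {h1 h2 : ℝ} (h : h1 ≠ h2) (A B : Set ℝ) :
    (A ×ˢ ({h1} : Set ℝ)) ∩ (B ×ˢ ({h2} : Set ℝ)) = ∅ := by
  apply Set.eq_empty_iff_forall_notMem.mpr
  rintro ⟨p, q⟩ ⟨ha, hb⟩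
  simp only [Set.mem_prod, Set.mem_singleton_iff] at ha hb
  exact h (ha.2.symm.trans hb.2)

lemma hh_empty_sep {l1 r1 l2 r2 h1 h2 : ℝ} (h : r1 < l2 ∨ r2 < l1) :
    (Set.Icc l1 r1 ×ˢ ({h1} : Set ℝ)) ∩ (Set.Icc l2 r2 ×ˢ ({h2} : Set ℝ)) = ∅ := by
  apply Set.eq_empty_iff_forall_notMem.mpr
  rintro ⟨p, q⟩ ⟨ha, hb⟩
  simp only [Set.mem_prod, Set.mem_Icc, Set.mem_singleton_iff] at ha hb
  rcases h with h | h <;> linarith [ha.1.1, ha.1.2, hb.1.1, hb.1.2]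

end HalinNum

namespace HalinAux2

open SimpleGraph Walk HalinAux

set_option linter.unusedSectionVars false

variable {V : Type*} [Fintype V] [DecidableEq V] {T : SimpleGraph V} [DecidableRel T.Adj]
variable (hT : T.IsTree) (r : V)

lemma onPath_iff {u x : V} : OnPath T u x r ↔ anc hT r u x := by
  constructor
  · intro h; exact h _ (pth_isPath hT r x)
  · intro h p hp; rwa [pth_unique hT p hp]

lemma exists_parent {x : V} (hx : x ≠ r) :
    ∃ y : V, T.Adj x y ∧ dep hT r x = dep hT r y + 1 ∧
      (pth hT r x).support = x :: (pth hT r y).support := by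
  obtain ⟨y, h, q, hq⟩ := Walk.exists_eq_cons_of_ne hx (pth hT r x)
  have hqp : q.IsPath := by
    have := pth_isPath hT r x; rw [hq] at this; exact this.of_cons
  have hqe : q = pth hT r y := pth_unique hT q hqp
  exact ⟨y, h, by rw [dep, dep, hq, ← hqe, Walk.length_cons],
    by rw [hq, Walk.support_cons, hqe]⟩

noncomputable def par (x : V) : V :=
  if hx : x = r then r else (exists_parent hT r hx).choose

lemma par_adj {x : V} (hx : x ≠ r) : T.Adj x (par hT r x) := by
  rw [par, dif_neg hx]; exact (exists_parent hT r hx).choose_spec.1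

lemma dep_par {x : V} (hx : x ≠ r) : dep hT r x = dep hT r (par hT r x) + 1 := by
  rw [par, dif_neg hx]; exact (exists_parent hT r hx).choose_spec.2.1

lemma support_par {x : V} (hx : x ≠ r) :
    (pth hT r x).support = x :: (pth hT r (par hT r x)).support := by
  rw [par, dif_neg hx]; exact (exists_parent hT r hx).choose_spec.2.2

lemma anc_par {x : V} (hx : x ≠ r) : anc hT r (par hT r x) x := by
  rw [anc, support_par hT r hx]
  right; exact Walk.start_mem_support _

lemma anc_step {u x : V} (hx : x ≠ r) (h : anc hT r u x) (hne : u ≠ x) :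
    anc hT r u (par hT r x) := by
  have h' : u ∈ (pth hT r x).support := h
  rw [support_par hT r hx] at h'
  rcases List.mem_cons.mp h' with h'' | h''
  · exact absurd h'' hne
  · exact h''

lemma eq_par_of {u x : V} (hx : x ≠ r) (h1 : anc hT r u x)
    (h2 : dep hT r u + 1 = dep hT r x) : u = par hT r x := by
  have hne : u ≠ x := by
    intro h; subst h; omega
  have h3 : anc hT r u (par hT r x) := anc_step hT r hx h1 hne
  have h4 : dep hT r u = dep hT r (par hT r x) := by
    have := dep_par hT r hx; omega
  exact eq_of_anc_dep hT r h3 h4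

lemma adj_par_or {u z : V} (h : T.Adj u z) :
    par hT r z = u ∨ par hT r u = z := by
  by_cases hzu : z ∈ (pth hT r u).support
  · -- z is an ancestor of u
    right
    by_cases huz : u ∈ (pth hT r z).support
    · exact absurd (anc_antisymm hT r huz hzu) h.ne
    · -- cons h (pth z) is a path from u to r
      have hu : u ≠ r := by
        intro hu; subst hu
        exact huz (Walk.end_mem_support _)
      have hp : (Walk.cons h (pth hT r z)).IsPath :=
        (pth_isPath hT r z).cons huz
      have he : Walk.cons h (pth hT r z) = pth hT r u := pth_unique hT _ hp
      symm
      apply eq_par_of hT r hu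
      · rw [anc, ← he]; right; exact Walk.start_mem_support _
      · rw [dep, dep, ← he, Walk.length_cons]
  · left
    have hz : z ≠ r := by
      intro hz; subst hz
      exact hzu (Walk.end_mem_support _)
    have hp : (Walk.cons h.symm (pth hT r u)).IsPath :=
      (pth_isPath hT r u).cons hzu
    have he : Walk.cons h.symm (pth hT r u) = pth hT r z := pth_unique hT _ hp
    symm
    apply eq_par_of hT r hz
    · rw [anc, ← he]; right; exact Walk.start_mem_support _
    · rw [dep, dep, ← he, Walk.length_cons]

lemma unique_nbr {z a b : V} (hz : T.degree z = 1) (ha : T.Adj z a) (hb : T.Adj z b) :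
    a = b := by
  rw [← T.card_neighborFinset_eq_degree, Finset.card_eq_one] at hz
  obtain ⟨c, hc⟩ := hz
  have h1 : a ∈ T.neighborFinset z := by rwa [SimpleGraph.mem_neighborFinset]
  have h2 : b ∈ T.neighborFinset z := by rwa [SimpleGraph.mem_neighborFinset]
  rw [hc, Finset.mem_singleton] at h1 h2
  rw [h1, h2]

variable {k : ℕ} (hk : 3 ≤ k) (v : Fin k → V) (hv : Function.Injective v)
variable (hleaf : ∀ i : Fin k, T.degree (v i) = 1)
variable (hleaves : ∀ u : V, T.degree u = 1 → ∃ i : Fin k, u = v i)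
variable (hr : T.Adj (v ⟨k - 1, Nat.sub_lt (Nat.lt_of_lt_of_le (Nat.succ_pos 2) hk) Nat.one_pos⟩) r)
variable (hplanar : ∀ u : V, u ≠ r → ∀ i j l : Fin k, i ≤ j → j ≤ l →
      OnPath T u (v i) r → OnPath T u (v l) r → OnPath T u (v j) r)

include hT hk hv hleaf hleaves hr hplanar

lemma r_not_leaf : ∀ i : Fin k, v i ≠ r := by
  intro m hm
  have hk0 : 0 < k := by omega
  have hlast : (⟨k - 1, Nat.sub_lt hk0 Nat.one_pos⟩ : Fin k) ≠ m := by
    intro h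
    rw [h, hm] at hr
    exact T.loopless.irrefl r hr
  obtain ⟨jv, hjv1, hjv2, hjv3⟩ : ∃ jv : ℕ, jv < k ∧ jv ≠ m.val ∧ jv ≠ k - 1 := by
    by_cases c0 : 0 ≠ m.val ∧ 0 ≠ k - 1
    · exact ⟨0, by omega, c0.1, c0.2⟩
    by_cases c1 : 1 ≠ m.val ∧ 1 ≠ k - 1
    · exact ⟨1, by omega, c1.1, c1.2⟩
    rw [not_and_or, not_ne_iff] at c0 c1
    rcases c0 with c0 | c0 <;> rcases c1 with c1 | c1 <;> exact ⟨2, by omega, by omega, by omega⟩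
  set j : Fin k := ⟨jv, hjv1⟩ with hjdef
  have hj1 : j ≠ m := by simp [hjdef, Fin.ext_iff]; omega
  have hj2 : j ≠ ⟨k - 1, Nat.sub_lt hk0 Nat.one_pos⟩ := by simp [hjdef, Fin.ext_iff]; omega
  have hjr : v j ≠ r := by
    intro h; exact hj1 (hv (h.trans hm.symm))
  have hrev : (pth hT r (v j)).reverse.IsPath := (pth_isPath hT r (v j)).reverse
  obtain ⟨a, hadj, q, hq⟩ := Walk.exists_eq_cons_of_ne (Ne.symm hjr) (pth hT r (v j)).reverse
  have hdr : T.degree r = 1 := by rw [← hm]; exact hleaf m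
  have ha : a = v ⟨k - 1, Nat.sub_lt hk0 Nat.one_pos⟩ := unique_nbr hdr hadj hr.symm
  have hmem : v ⟨k - 1, Nat.sub_lt hk0 Nat.one_pos⟩ ∈ (pth hT r (v j)).support := by
    have : a ∈ (pth hT r (v j)).reverse.support := by rw [hq]; simp
    rw [Walk.support_reverse, List.mem_reverse] at this
    rwa [ha] at this
  have hdeg := two_le_degree_interior (pth hT r (v j)) (pth_isPath hT r (v j)) hmem
    (fun h => hj2 (hv h).symm) (fun h => T.loopless.irrefl r (h ▸ hr))
  rw [hleaf _] at hdeg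
  omega


lemma S_leaf {i j : Fin k} (h : anc hT r (v i) (v j)) : i = j := by
  by_contra hne
  have hvne : v i ≠ v j := fun h' => hne (hv h')
  have hdeg := two_le_degree_interior (pth hT r (v j)) (pth_isPath hT r (v j)) h
    hvne (r_not_leaf hT r hk v hv hleaf hleaves hr hplanar i)
  rw [hleaf i] at hdeg
  omega

lemma dep_vlast : dep hT r (v ⟨k - 1, Nat.sub_lt (Nat.lt_of_lt_of_le (Nat.succ_pos 2) hk) Nat.one_pos⟩) = 1 := by
  have hp : (Walk.cons hr Walk.nil).IsPath := by
    rw [Walk.cons_isPath_iff]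
    refine ⟨by simp, by simpa using (r_not_leaf hT r hk v hv hleaf hleaves hr hplanar _)⟩
  have := pth_unique hT _ hp
  rw [dep, ← this]
  simp

/-- the set of leaf indices below `u` -/
noncomputable def Sf (u : V) : Finset (Fin k) :=
  @Finset.filter _ (fun i => anc hT r u (v i)) (Classical.decPred _) Finset.univ

omit hk hv hleaf hleaves hr hplanar in
lemma mem_Sf {u : V} {i : Fin k} : i ∈ Sf hT r v u ↔ anc hT r u (v i) := by
  simp [Sf, Finset.mem_filter]

omit hk hv hleaf hleaves hr hplanar in
lemma Sf_r : Sf hT r v r = Finset.univ := by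
  ext i; simp [Sf, anc_r]

lemma exists_child {u : V} (hur : u ≠ r) (hl : ¬∃ i : Fin k, v i = u) :
    ∃ z, T.Adj u z ∧ dep hT r z = dep hT r u + 1 ∧ par hT r z = u := by
  have hd1 : T.degree u ≠ 1 := by
    intro h
    obtain ⟨i, hi⟩ := hleaves u h
    exact hl ⟨i, hi.symm⟩
  have hpos : 0 < T.degree u := by
    rw [← T.card_neighborFinset_eq_degree]
    exact Finset.card_pos.mpr ⟨par hT r u, by rw [SimpleGraph.mem_neighborFinset]; exact par_adj hT r hur⟩
  have h2 : 1 < (T.neighborFinset u).card := by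
    rw [T.card_neighborFinset_eq_degree]; omega
  obtain ⟨z, hz, hzp⟩ := Finset.exists_mem_ne h2 (par hT r u)
  rw [SimpleGraph.mem_neighborFinset] at hz
  have hpz : par hT r z = u := by
    rcases adj_par_or hT r hz with h | h
    · exact h
    · exact absurd h.symm hzp
  have hzr : z ≠ r := by
    intro h; subst h
    rw [par, dif_pos rfl] at hpz
    exact hur hpz.symm
  exact ⟨z, hz, by rw [dep_par hT r hzr, hpz], hpz⟩

lemma exists_leaf_desc : ∀ (m : ℕ) (u : V), Fintype.card V ≤ dep hT r u + m →
    ∃ i, anc hT r u (v i) := by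
  intro m
  induction m with
  | zero =>
    intro u hu
    have := (pth_isPath hT r u).length_lt
    rw [← dep] at this
    omega
  | succ m ih =>
    intro u hu
    by_cases hl : ∃ i, v i = u
    · obtain ⟨i, rfl⟩ := hl
      exact ⟨i, anc_self hT r _⟩
    by_cases hur : u = r
    · exact ⟨⟨0, by omega⟩, by rw [hur]; exact anc_r hT r _⟩
    obtain ⟨z, hadj, hdep, hpz⟩ := exists_child hT r hk v hv hleaf hleaves hr hplanar hur hl
    obtain ⟨i, hi⟩ := ih z (by omega)
    refine ⟨i, anc_trans hT r ?_ hi⟩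
    rw [← hpz]
    exact anc_par hT r (by intro h; subst h; rw [par, dif_pos rfl] at hpz; exact hur hpz.symm)

lemma Sf_nonempty (u : V) : (Sf hT r v u).Nonempty := by
  obtain ⟨i, hi⟩ := exists_leaf_desc hT r hk v hv hleaf hleaves hr hplanar (Fintype.card V) u (by omega)
  exact ⟨i, (mem_Sf hT r v).mpr hi⟩

/-- largest leaf index below u -/
noncomputable def Rmx (u : V) : ℕ := (Sf hT r v u).sup (fun i => i.val)

lemma Rmx_mem (u : V) : ∃ i ∈ Sf hT r v u, i.val = Rmx hT r v u := by
  obtain ⟨i, hi, he⟩ := Finset.exists_mem_eq_sup _ (Sf_nonempty hT r hk v hv hleaf hleaves hr hplanar u)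
    (fun i : Fin k => i.val)
  exact ⟨i, hi, he.symm⟩

omit hk hv hleaf hleaves hr hplanar in
lemma Rmx_le {u : V} {i : Fin k} (h : i ∈ Sf hT r v u) : i.val ≤ Rmx hT r v u :=
  Finset.le_sup h

lemma Rmx_lt_k (u : V) : Rmx hT r v u < k := by
  obtain ⟨i, _, he⟩ := Rmx_mem hT r hk v hv hleaf hleaves hr hplanar u
  rw [← he]; exact i.isLt

omit hk hv hleaf hleaves hr hplanar in
lemma Sf_anc_subset {u z : V} (h : anc hT r u z) : Sf hT r v z ⊆ Sf hT r v u := by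
  intro i hi
  rw [mem_Sf] at hi ⊢
  exact anc_trans hT r h hi

omit hk hv hleaf hleaves hr hplanar in
lemma Sf_mono_Rmx {u z : V} (h : anc hT r u z) : Rmx hT r v z ≤ Rmx hT r v u :=
  Finset.sup_mono (Sf_anc_subset hT r v h)

/-- children -/
noncomputable def chl (u : V) : Finset V :=
  Finset.univ.filter (fun z => T.Adj u z ∧ dep hT r z = dep hT r u + 1)

omit hk hv hleaf hleaves hr hplanar in
lemma mem_chl {u z : V} : z ∈ chl hT r u ↔ T.Adj u z ∧ dep hT r z = dep hT r u + 1 := by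
  simp [chl]

omit hk hv hleaf hleaves hr hplanar in
lemma par_of_chl {u z : V} (h : z ∈ chl hT r u) : par hT r z = u := by
  rw [mem_chl] at h
  rcases adj_par_or hT r h.1 with h' | h'
  · exact h'
  · exfalso
    have hur : u ≠ r := by
      intro hu; subst hu; rw [par, dif_pos rfl] at h'; exact (h.1.ne h').elim
      -- if u = r then par r = r = z, but adj r z means z ≠ r
    rw [dep_par hT r hur, h'] at h
    omega

omit hk hv hleaf hleaves hr hplanar in
lemma anc_of_chl {u z : V} (h : z ∈ chl hT r u) : anc hT r u z := by
  have hzr : z ≠ r := by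
    intro hz; subst hz
    rw [mem_chl] at h
    have := h.2; simp at this
  have := par_of_chl hT r h
  rw [← this]
  exact anc_par hT r hzr

lemma chl_nonempty {u : V} (hl : ¬∃ i : Fin k, v i = u) : (chl hT r u).Nonempty := by
  by_cases hur : u = r
  · refine ⟨v ⟨k - 1, Nat.sub_lt (Nat.lt_of_lt_of_le (Nat.succ_pos 2) hk) Nat.one_pos⟩, ?_⟩
    rw [mem_chl, hur]
    exact ⟨hr.symm, by rw [dep_vlast hT r hk v hv hleaf hleaves hr hplanar]; simp⟩
  · obtain ⟨z, h1, h2, _⟩ := exists_child hT r hk v hv hleaf hleaves hr hplanar hur hl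
    exact ⟨z, (mem_chl hT r).mpr ⟨h1, h2⟩⟩

/-- the minimum over children of Rmx -/
noncomputable def rhx (u : V) : ℕ := (((chl hT r u).image (Rmx hT r v)).min).getD 0

omit hk hv hleaf hleaves hr hplanar in
lemma rhx_eq {u : V} (hne : (chl hT r u).Nonempty) :
    ∃ z ∈ chl hT r u, Rmx hT r v z = rhx hT r v u := by
  have hne' : ((chl hT r u).image (Rmx hT r v)).Nonempty := hne.image _
  obtain ⟨a, ha⟩ := Finset.min_of_nonempty hne'
  have : a ∈ (chl hT r u).image (Rmx hT r v) := Finset.mem_of_min ha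
  rw [Finset.mem_image] at this
  obtain ⟨z, hz, he⟩ := this
  exact ⟨z, hz, by rw [he, rhx, ha]; rfl⟩

omit hk hv hleaf hleaves hr hplanar in
lemma rhx_le {u z : V} (h : z ∈ chl hT r u) : rhx hT r v u ≤ Rmx hT r v z := by
  have hmem : Rmx hT r v z ∈ (chl hT r u).image (Rmx hT r v) := Finset.mem_image_of_mem _ h
  have := Finset.min_le hmem
  rw [rhx]
  obtain ⟨a, ha⟩ := Finset.min_of_nonempty ⟨_, hmem⟩
  rw [ha]
  rw [ha] at this
  exact_mod_cast this

/-- interval property -/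
lemma S_interval {u : V} {i j l : Fin k} (hi : i ∈ Sf hT r v u) (hl : l ∈ Sf hT r v u)
    (hij : i ≤ j) (hjl : j ≤ l) : j ∈ Sf hT r v u := by
  by_cases hur : u = r
  · subst hur; rw [Sf_r]; exact Finset.mem_univ j
  rw [mem_Sf] at hi hl ⊢
  rw [← onPath_iff hT r] at hi hl ⊢
  exact hplanar u hur i j l hij hjl hi hl

omit hk hv hleaf hleaves hr hplanar in
lemma Sf_disjoint {u z : V} (hdep : dep hT r u = dep hT r z) (hne : u ≠ z) {i : Fin k}
    (hu : i ∈ Sf hT r v u) (hz : i ∈ Sf hT r v z) : False := by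
  rw [mem_Sf] at hu hz
  rcases anc_comparable hT r hu hz with h | h
  · exact hne (eq_of_anc_dep hT r h hdep)
  · exact hne (eq_of_anc_dep hT r h hdep.symm).symm

/-- geometric condition implies being a child -/
lemma child_of_geo {u z : V} (hul : ¬∃ i : Fin k, v i = u) (hdep : dep hT r z = dep hT r u + 1)
    (h1 : rhx hT r v u ≤ Rmx hT r v z) (h2 : Rmx hT r v z ≤ Rmx hT r v u) :
    z ∈ chl hT r u := by
  -- Rmx z ∈ Sf u by interval property
  obtain ⟨c, hc, hce⟩ := rhx_eq hT r v (chl_nonempty hT r hk v hv hleaf hleaves hr hplanar hul)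
  obtain ⟨ic, hic, hice⟩ := Rmx_mem hT r hk v hv hleaf hleaves hr hplanar c
  have hicu : ic ∈ Sf hT r v u := Sf_anc_subset hT r v (anc_of_chl hT r hc) hic
  obtain ⟨iu, hiu, hiue⟩ := Rmx_mem hT r hk v hv hleaf hleaves hr hplanar u
  obtain ⟨iz, hiz, hize⟩ := Rmx_mem hT r hk v hv hleaf hleaves hr hplanar z
  have hmem : iz ∈ Sf hT r v u := by
    refine S_interval hT r hk v hv hleaf hleaves hr hplanar hicu hiu ?_ ?_
    · show ic ≤ iz
      rw [Fin.le_def]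
      omega
    · show iz ≤ iu
      rw [Fin.le_def]
      omega
  -- so u and z are comparable
  rw [mem_Sf] at hmem hiz
  have hanc : anc hT r u z := by
    rcases anc_comparable hT r hmem hiz with h | h
    · exact h
    · have := dep_le_of_anc hT r h
      omega
  have hzr : z ≠ r := by
    intro hzz; subst hzz; simp at hdep
  have := eq_par_of hT r hzr hanc (by omega)
  rw [mem_chl]
  refine ⟨?_, hdep⟩
  have hadj := par_adj hT r hzr
  rw [← this] at hadj
  exact hadj.symm



lemma Sf_leaf (i : Fin k) : Sf hT r v (v i) = {i} := by
  ext j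
  rw [mem_Sf hT r v, Finset.mem_singleton]
  constructor
  · intro h; exact (S_leaf hT r hk v hv hleaf hleaves hr hplanar h).symm
  · rintro rfl; exact anc_self hT r _

lemma Rmx_leaf (i : Fin k) : Rmx hT r v (v i) = i.val := by
  rw [Rmx, Sf_leaf hT r hk v hv hleaf hleaves hr hplanar]
  simp

omit hk hv hleaf hleaves hr hplanar in
lemma dep_pos {u : V} (h : u ≠ r) : 1 ≤ dep hT r u := by
  have := (dep_eq_zero_iff hT r (x := u)).not.mpr h
  omega

lemma dep_leaf_pos (i : Fin k) : 1 ≤ dep hT r (v i) :=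
  dep_pos hT r (r_not_leaf hT r hk v hv hleaf hleaves hr hplanar i)

lemma Rmx_r : Rmx hT r v r = k - 1 := by
  rw [Rmx, Sf_r hT r v]
  apply le_antisymm
  · apply Finset.sup_le
    intro i _
    omega
  · calc k - 1 = (⟨k - 1, by omega⟩ : Fin k).val := rfl
    _ ≤ _ := Finset.le_sup (Finset.mem_univ _)

lemma dep_lt_card (u : V) : dep hT r u < Fintype.card V := by
  have := (pth_isPath hT r u).length_lt
  rwa [← dep] at this

lemma k_le_card : k ≤ Fintype.card V := by
  calc k = Fintype.card (Fin k) := (Fintype.card_fin k).symm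
  _ ≤ Fintype.card V := Fintype.card_le_of_injective v hv

/-- same-depth separation -/
lemma sep_same_dep {u z : V} (hul : ¬∃ i : Fin k, v i = u) (hzl : ¬∃ i : Fin k, v i = z)
    (hdep : dep hT r u = dep hT r z) (hne : u ≠ z) :
    Rmx hT r v z < rhx hT r v u ∨ Rmx hT r v u < rhx hT r v z := by
  obtain ⟨iu, hiu, hiue⟩ := Rmx_mem hT r hk v hv hleaf hleaves hr hplanar u
  obtain ⟨iz, hiz, hize⟩ := Rmx_mem hT r hk v hv hleaf hleaves hr hplanar z
  obtain ⟨cu, hcu, hcue⟩ := rhx_eq hT r v (chl_nonempty hT r hk v hv hleaf hleaves hr hplanar hul)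
  obtain ⟨cz, hcz, hcze⟩ := rhx_eq hT r v (chl_nonempty hT r hk v hv hleaf hleaves hr hplanar hzl)
  obtain ⟨icu, hicu, hicue⟩ := Rmx_mem hT r hk v hv hleaf hleaves hr hplanar cu
  obtain ⟨icz, hicz, hicze⟩ := Rmx_mem hT r hk v hv hleaf hleaves hr hplanar cz
  have hicu' : icu ∈ Sf hT r v u := Sf_anc_subset hT r v (anc_of_chl hT r hcu) hicu
  have hicz' : icz ∈ Sf hT r v z := Sf_anc_subset hT r v (anc_of_chl hT r hcz) hicz
  have hneq : Rmx hT r v u ≠ Rmx hT r v z := by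
    intro h
    have : iu = iz := Fin.ext (by omega)
    exact Sf_disjoint hT r v hdep hne hiu (this ▸ hiz)
  rcases Nat.lt_or_ge (Rmx hT r v z) (Rmx hT r v u) with h | h
  · left
    by_contra hcon
    push_neg at hcon
    have : iz ∈ Sf hT r v u := by
      refine S_interval hT r hk v hv hleaf hleaves hr hplanar hicu' hiu ?_ ?_ <;>
        rw [Fin.le_def] <;> omega
    exact Sf_disjoint hT r v hdep hne this hiz
  · right
    have h' : Rmx hT r v u < Rmx hT r v z := by omega
    by_contra hcon
    push_neg at hcon
    have : iu ∈ Sf hT r v z := by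
      refine S_interval hT r hk v hv hleaf hleaves hr hplanar hicz' hiz ?_ ?_ <;>
        rw [Fin.le_def] <;> omega
    exact Sf_disjoint hT r v hdep.symm hne.symm this hiu

lemma rhx_le_Rmx {u : V} (hul : ¬∃ i : Fin k, v i = u) :
    rhx hT r v u ≤ Rmx hT r v u := by
  obtain ⟨c, hc, hce⟩ := rhx_eq hT r v (chl_nonempty hT r hk v hv hleaf hleaves hr hplanar hul)
  rw [← hce]
  exact Sf_mono_Rmx hT r v (anc_of_chl hT r hc)

lemma rhx_lt_k {u : V} (hul : ¬∃ i : Fin k, v i = u) : rhx hT r v u < k :=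
  Nat.lt_of_le_of_lt (rhx_le_Rmx hT r hk v hv hleaf hleaves hr hplanar hul)
    (Rmx_lt_k hT r hk v hv hleaf hleaves hr hplanar u)

/-! ### geometric data -/

omit hk hv hleaf hleaves hr hplanar

noncomputable def xi (u : V) : ℝ := (k : ℝ) - Rmx hT r v u - (2⁻¹ : ℝ) ^ (dep hT r u)

noncomputable def Rtt (u : V) : ℝ := (k : ℝ) - rhx hT r v u - (2⁻¹ : ℝ) ^ (dep hT r u + 1)

noncomputable def Yc (n : ℕ) (i : Fin k) : ℝ := (i : ℝ) - 2 * (n : ℝ)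

open scoped Classical in
noncomputable def Bf (u : V) : ℝ :=
  if h : ∃ i, v i = u then Yc (Fintype.card V) h.choose else -(dep hT r u : ℝ)

open scoped Classical in
noncomputable def Tf (u : V) : ℝ :=
  if h : ∃ i, v i = u then
    (if h.choose.val = 0 ∨ h.choose.val = k - 1 then 1 else -(dep hT r u : ℝ) + 1)
  else -(dep hT r u : ℝ) + 1

open scoped Classical in
noncomputable def Hf (u : V) : ℝ :=
  if h : ∃ i, v i = u then (if h.choose.val = 0 then 1 else Yc (Fintype.card V) h.choose)
  else -(dep hT r u : ℝ)

open scoped Classical in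
noncomputable def Lff (u : V) : ℝ :=
  if h : ∃ i, v i = u then (if h.choose.val = 0 then (2⁻¹ : ℝ) else xi hT r v u)
  else xi hT r v u

open scoped Classical in
noncomputable def Rtf (u : V) : ℝ :=
  if h : ∃ i, v i = u then
    (if h.choose.val = 0 then xi hT r v u
     else xi hT r v (v ⟨h.choose.val - 1, Nat.lt_of_le_of_lt (Nat.sub_le _ _) h.choose.isLt⟩))
  else Rtt hT r v u

noncomputable def shape (u : V) : Set (ℝ × ℝ) :=
  ({xi hT r v u} : Set ℝ) ×ˢ Set.Icc (Bf hT r v u) (Tf hT r v u) ∪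
    Set.Icc (Lff hT r v u) (Rtf hT r v u) ×ˢ ({Hf hT r v u} : Set ℝ)

include hv

omit hT in
lemma choose_spec_eq {i : Fin k} (h : ∃ j, v j = v i) : h.choose = i :=
  hv h.choose_spec

lemma Bf_leaf (i : Fin k) : Bf hT r v (v i) = Yc (Fintype.card V) i := by
  rw [Bf, dif_pos ⟨i, rfl⟩]
  congr 1
  exact choose_spec_eq v hv _

lemma Bf_nonleaf {u : V} (hul : ¬∃ i : Fin k, v i = u) : Bf hT r v u = -(dep hT r u : ℝ) := by
  rw [Bf, dif_neg hul]

lemma Tf_leaf (i : Fin k) :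
    Tf hT r v (v i) = if i.val = 0 ∨ i.val = k - 1 then 1 else -(dep hT r (v i) : ℝ) + 1 := by
  rw [Tf, dif_pos ⟨i, rfl⟩, choose_spec_eq v hv]

lemma Tf_nonleaf {u : V} (hul : ¬∃ i : Fin k, v i = u) :
    Tf hT r v u = -(dep hT r u : ℝ) + 1 := by
  rw [Tf, dif_neg hul]

lemma Hf_leaf (i : Fin k) :
    Hf hT r v (v i) = if i.val = 0 then 1 else Yc (Fintype.card V) i := by
  rw [Hf, dif_pos ⟨i, rfl⟩, choose_spec_eq v hv]

lemma Hf_nonleaf {u : V} (hul : ¬∃ i : Fin k, v i = u) : Hf hT r v u = -(dep hT r u : ℝ) := by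
  rw [Hf, dif_neg hul]

lemma Lff_leaf (i : Fin k) :
    Lff hT r v (v i) = if i.val = 0 then (2⁻¹ : ℝ) else xi hT r v (v i) := by
  rw [Lff, dif_pos ⟨i, rfl⟩, choose_spec_eq v hv]

lemma Lff_nonleaf {u : V} (hul : ¬∃ i : Fin k, v i = u) : Lff hT r v u = xi hT r v u := by
  rw [Lff, dif_neg hul]

lemma Rtf_leaf {i : Fin k} (hi : i.val ≠ 0) :
    Rtf hT r v (v i) = xi hT r v (v ⟨i.val - 1, Nat.lt_of_le_of_lt (Nat.sub_le _ _) i.isLt⟩) := by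
  rw [Rtf, dif_pos ⟨i, rfl⟩]
  simp only [choose_spec_eq v hv]
  rw [if_neg hi]

lemma Rtf_leaf0 {i : Fin k} (hi : i.val = 0) : Rtf hT r v (v i) = xi hT r v (v i) := by
  rw [Rtf, dif_pos ⟨i, rfl⟩]
  simp only [choose_spec_eq v hv]
  rw [if_pos hi]

lemma Rtf_nonleaf {u : V} (hul : ¬∃ i : Fin k, v i = u) : Rtf hT r v u = Rtt hT r v u := by
  rw [Rtf, dif_neg hul]


/-! ### stage 5 : coordinate comparisons and hit characterizations -/

include hk hleaf hleaves hr hplanar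

open HalinNum

lemma xi_le_xi_iff {u z : V} :
    xi hT r v u ≤ xi hT r v z ↔
      (Rmx hT r v z < Rmx hT r v u ∨
        (Rmx hT r v z = Rmx hT r v u ∧ dep hT r u ≤ dep hT r z)) := by
  have h : xi hT r v u ≤ xi hT r v z ↔
      (Rmx hT r v z : ℝ) + (2⁻¹ : ℝ) ^ (dep hT r z) ≤
        (Rmx hT r v u : ℝ) + (2⁻¹ : ℝ) ^ (dep hT r u) := by
    rw [xi, xi]; constructor <;> intro <;> linarith
  rw [h, key_le (half_pow_pos _) (half_pow_le_one _) (half_pow_pos _) (half_pow_le_one _),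
    half_pow_le_iff]

lemma xi_le_Rtt_iff {u z : V} :
    xi hT r v z ≤ Rtt hT r v u ↔
      (rhx hT r v u < Rmx hT r v z ∨
        (rhx hT r v u = Rmx hT r v z ∧ dep hT r z ≤ dep hT r u + 1)) := by
  have h : xi hT r v z ≤ Rtt hT r v u ↔
      (rhx hT r v u : ℝ) + (2⁻¹ : ℝ) ^ (dep hT r u + 1) ≤
        (Rmx hT r v z : ℝ) + (2⁻¹ : ℝ) ^ (dep hT r z) := by
    rw [xi, Rtt]; constructor <;> intro <;> linarith
  rw [h, key_le (half_pow_pos _) (half_pow_le_one _) (half_pow_pos _) (half_pow_le_one _),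
    half_pow_le_iff]

lemma Rtt_lt_xi_iff {u z : V} :
    Rtt hT r v u < xi hT r v z ↔
      (Rmx hT r v z < rhx hT r v u ∨
        (Rmx hT r v z = rhx hT r v u ∧ dep hT r u + 1 < dep hT r z)) := by
  have h : Rtt hT r v u < xi hT r v z ↔
      (Rmx hT r v z : ℝ) + (2⁻¹ : ℝ) ^ (dep hT r z) <
        (rhx hT r v u : ℝ) + (2⁻¹ : ℝ) ^ (dep hT r u + 1) := by
    rw [xi, Rtt]; constructor <;> intro <;> linarith
  rw [h, key_lt (half_pow_pos _) (half_pow_le_one _) (half_pow_pos _) (half_pow_le_one _),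
    half_pow_lt_iff]

lemma xi_r : xi hT r v r = 0 := by
  rw [xi, Rmx_r hT r hk v hv hleaf hleaves hr hplanar, dep_r, pow_zero]
  have : (1 : ℕ) ≤ k := by omega
  push_cast [this]
  ring

lemma xi_vlast :
    xi hT r v (v ⟨k - 1, Nat.sub_lt (Nat.lt_of_lt_of_le (Nat.succ_pos 2) hk) Nat.one_pos⟩)
      = 2⁻¹ := by
  rw [xi, Rmx_leaf hT r hk v hv hleaf hleaves hr hplanar,
    dep_vlast hT r hk v hv hleaf hleaves hr hplanar]
  have : (1 : ℕ) ≤ k := by omega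
  push_cast [this]
  norm_num

lemma Yc_lt_negdep (i : Fin k) (u : V) :
    Yc (Fintype.card V) i < -(dep hT r u : ℝ) := by
  have h1 : i.val + 1 ≤ k := i.isLt
  have h2 : k ≤ Fintype.card V := k_le_card hT r hk v hv hleaf hleaves hr hplanar
  have h3 : dep hT r u + 1 ≤ Fintype.card V := dep_lt_card hT r hk v hv hleaf hleaves hr hplanar u
  have c1 : (i.val : ℝ) + 1 ≤ (Fintype.card V : ℝ) := by exact_mod_cast le_trans h1 h2
  have c2 : (dep hT r u : ℝ) + 1 ≤ (Fintype.card V : ℝ) := by exact_mod_cast h3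
  rw [Yc]
  linarith

omit hT hk hleaf hleaves hr hplanar in
lemma Yc_mono {i j : Fin k} :
    Yc (Fintype.card V) i ≤ Yc (Fintype.card V) j ↔ i.val ≤ j.val := by
  rw [Yc, Yc, sub_le_sub_iff_right]
  exact Nat.cast_le

/-- membership in S from the rho/Rmx window -/
lemma mem_Sf_between {u : V} (hul : ¬∃ i : Fin k, v i = u) (j : Fin k)
    (h1 : rhx hT r v u ≤ j.val) (h2 : j.val ≤ Rmx hT r v u) : j ∈ Sf hT r v u := by
  obtain ⟨c, hc, hce⟩ := rhx_eq hT r v (chl_nonempty hT r hk v hv hleaf hleaves hr hplanar hul)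
  obtain ⟨ic, hic, hice⟩ := Rmx_mem hT r hk v hv hleaf hleaves hr hplanar c
  have hicu : ic ∈ Sf hT r v u := Sf_anc_subset hT r v (anc_of_chl hT r hc) hic
  obtain ⟨iu, hiu, hiue⟩ := Rmx_mem hT r hk v hv hleaf hleaves hr hplanar u
  refine S_interval hT r hk v hv hleaf hleaves hr hplanar hicu hiu ?_ ?_ <;>
    rw [Fin.le_def] <;> omega

/-- from ancestor and depth bound to child -/
lemma chl_of_anc_dep {u : V} {i : Fin k} (h : anc hT r u (v i)) (hne : u ≠ v i)
    (hdep : dep hT r (v i) ≤ dep hT r u + 1) : v i ∈ chl hT r u := by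
  have hir : v i ≠ r := r_not_leaf hT r hk v hv hleaf hleaves hr hplanar i
  have hlt : dep hT r u < dep hT r (v i) := dep_lt_of_anc hT r h hne
  have hdep' : dep hT r (v i) = dep hT r u + 1 := by omega
  have hpar := eq_par_of hT r hir h (by omega)
  rw [mem_chl hT r]
  refine ⟨?_, hdep'⟩
  have := par_adj hT r hir
  rw [← hpar] at this
  exact this.symm

/-- the hit predicate : the horizontal arm of `u` crosses the vertical arm of `z` -/
def Hitt (u z : V) : Prop :=
  Lff hT r v u ≤ xi hT r v z ∧ xi hT r v z ≤ Rtf hT r v u ∧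
    Bf hT r v z ≤ Hf hT r v u ∧ Hf hT r v u ≤ Tf hT r v z

/-- M1 : characterization of hits by arms of non-leaf vertices -/
lemma M1 {u z : V} (hul : ¬∃ i : Fin k, v i = u) (hne : z ≠ u) :
    Hitt hT r v u z ↔ z ∈ chl hT r u := by
  rw [Hitt, Lff_nonleaf hT r v hv hul, Rtf_nonleaf hT r v hv hul, Hf_nonleaf hT r v hv hul]
  constructor
  · rintro ⟨c1, c2, c3, c4⟩
    by_cases hzl : ∃ i, v i = z
    · obtain ⟨i, rfl⟩ := hzl
      rw [Bf_leaf hT r v hv i] at c3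
      rw [Tf_leaf hT r v hv i] at c4
      have hRzi : Rmx hT r v (v i) = i.val := Rmx_leaf hT r hk v hv hleaf hleaves hr hplanar i
      -- from c1 : i ≤ Rmx u
      have hx1 : i.val ≤ Rmx hT r v u := by
        rcases (xi_le_xi_iff hT r hk v hv hleaf hleaves hr hplanar).mp c1 with h | h
        · rw [hRzi] at h; omega
        · rw [hRzi] at h; omega
      -- from c2 : rhx u ≤ i, and if equal a depth bound
      have hx2 : rhx hT r v u ≤ i.val := by
        rcases (xi_le_Rtt_iff hT r hk v hv hleaf hleaves hr hplanar).mp c2 with h | h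
        · rw [hRzi] at h; omega
        · rw [hRzi] at h; omega
      have hanc : anc hT r u (v i) := by
        have := mem_Sf_between hT r hk v hv hleaf hleaves hr hplanar hul i hx2 hx1
        rwa [mem_Sf hT r v] at this
      have hneq : u ≠ v i := fun h => hul ⟨i, h.symm⟩
      -- establish depth bound
      have hdep : dep hT r (v i) ≤ dep hT r u + 1 := by
        by_cases hi0 : i.val = 0
        · -- use the x-condition : rhx u = 0 forces depth bound
          rcases (xi_le_Rtt_iff hT r hk v hv hleaf hleaves hr hplanar).mp c2 with h | h
          · rw [hRzi, hi0] at h; omega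
          · exact h.2
        · by_cases hik : i.val = k - 1
          · have : i = ⟨k - 1, Nat.sub_lt (Nat.lt_of_lt_of_le (Nat.succ_pos 2) hk) Nat.one_pos⟩ :=
              Fin.ext hik
            rw [this, dep_vlast hT r hk v hv hleaf hleaves hr hplanar]
            omega
          · rw [if_neg (by tauto)] at c4
            have : (dep hT r (v i) : ℝ) ≤ (dep hT r u : ℝ) + 1 := by linarith
            exact_mod_cast this
      exact chl_of_anc_dep hT r hk v hv hleaf hleaves hr hplanar hanc hneq hdep
    · -- z is not a leaf
      rw [Bf_nonleaf hT r v hv hzl] at c3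
      rw [Tf_nonleaf hT r v hv hzl] at c4
      have hd1 : dep hT r u ≤ dep hT r z := by
        have : (dep hT r u : ℝ) ≤ (dep hT r z : ℝ) := by linarith
        exact_mod_cast this
      have hd2 : dep hT r z ≤ dep hT r u + 1 := by
        have : (dep hT r z : ℝ) ≤ (dep hT r u : ℝ) + 1 := by linarith
        exact_mod_cast this
      have hx1 : Rmx hT r v z ≤ Rmx hT r v u := by
        rcases (xi_le_xi_iff hT r hk v hv hleaf hleaves hr hplanar).mp c1 with h | h <;> omega
      have hx2 : rhx hT r v u ≤ Rmx hT r v z := by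
        rcases (xi_le_Rtt_iff hT r hk v hv hleaf hleaves hr hplanar).mp c2 with h | h <;> omega
      rcases Nat.eq_or_lt_of_le hd1 with hd | hd
      · -- same depth : contradiction
        exfalso
        rcases sep_same_dep hT r hk v hv hleaf hleaves hr hplanar hul hzl hd
          (Ne.symm hne) with h | h
        · omega
        · have := rhx_le_Rmx hT r hk v hv hleaf hleaves hr hplanar hzl
          omega
      · -- depth difference one : child
        exact child_of_geo hT r hk v hv hleaf hleaves hr hplanar hul (by omega) hx2 hx1
  · intro hc
    have hdep := ((mem_chl hT r).mp hc).2
    have hRz : Rmx hT r v z ≤ Rmx hT r v u := Sf_mono_Rmx hT r v (anc_of_chl hT r hc)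
    have hrz : rhx hT r v u ≤ Rmx hT r v z := rhx_le hT r v hc
    refine ⟨?_, ?_, ?_, ?_⟩
    · rw [xi_le_xi_iff hT r hk v hv hleaf hleaves hr hplanar]
      rcases Nat.eq_or_lt_of_le hRz with h | h
      · exact Or.inr ⟨h, by omega⟩
      · exact Or.inl h
    · rw [xi_le_Rtt_iff hT r hk v hv hleaf hleaves hr hplanar]
      rcases Nat.eq_or_lt_of_le hrz with h | h
      · exact Or.inr ⟨h, by omega⟩
      · exact Or.inl h
    · by_cases hzl : ∃ i, v i = z
      · obtain ⟨i, rfl⟩ := hzl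
        rw [Bf_leaf hT r v hv i]
        exact le_of_lt (Yc_lt_negdep hT r hk v hv hleaf hleaves hr hplanar i u)
      · rw [Bf_nonleaf hT r v hv hzl]
        have : (dep hT r z : ℝ) = (dep hT r u : ℝ) + 1 := by exact_mod_cast hdep
        linarith
    · by_cases hzl : ∃ i, v i = z
      · obtain ⟨i, rfl⟩ := hzl
        rw [Tf_leaf hT r v hv i]
        split_ifs with h
        · have : (0 : ℝ) ≤ (dep hT r u : ℝ) := Nat.cast_nonneg _
          linarith
        · have : (dep hT r (v i) : ℝ) = (dep hT r u : ℝ) + 1 := by exact_mod_cast hdep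
          linarith
      · rw [Tf_nonleaf hT r v hv hzl]
        have : (dep hT r z : ℝ) = (dep hT r u : ℝ) + 1 := by exact_mod_cast hdep
        linarith

/-- M2 : hits by the bottom staircase arm of a non-first leaf -/
lemma M2 {i : Fin k} (hi : i.val ≠ 0) {z : V} (hne : z ≠ v i) :
    Hitt hT r v (v i) z ↔
      z = v ⟨i.val - 1, Nat.lt_of_le_of_lt (Nat.sub_le _ _) i.isLt⟩ := by
  set ip : Fin k := ⟨i.val - 1, Nat.lt_of_le_of_lt (Nat.sub_le _ _) i.isLt⟩ with hip
  rw [Hitt, Lff_leaf hT r v hv i, Rtf_leaf hT r v hv hi, Hf_leaf hT r v hv i,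
    if_neg hi, if_neg hi]
  constructor
  · rintro ⟨c1, c2, c3, c4⟩
    by_cases hzl : ∃ j, v j = z
    · obtain ⟨j, rfl⟩ := hzl
      rw [Bf_leaf hT r v hv j] at c3
      have hji : j.val ≤ i.val := (Yc_mono v hv).mp c3
      have hRi : Rmx hT r v (v i) = i.val := Rmx_leaf hT r hk v hv hleaf hleaves hr hplanar i
      have hRj : Rmx hT r v (v j) = j.val := Rmx_leaf hT r hk v hv hleaf hleaves hr hplanar j
      have hRp : Rmx hT r v (v ip) = ip.val := Rmx_leaf hT r hk v hv hleaf hleaves hr hplanar ip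
      have hj1 : j.val < i.val := by
        rcases (xi_le_xi_iff hT r hk v hv hleaf hleaves hr hplanar).mp c1 with h | h
        · omega
        · exfalso; apply hne; congr 1; apply Fin.ext; omega
      have hj2 : i.val - 1 ≤ j.val := by
        rcases (xi_le_xi_iff hT r hk v hv hleaf hleaves hr hplanar).mp c2 with h | h
        · rw [hRj, hRp] at h; simp only [hip] at h; omega
        · rw [hRj, hRp] at h; simp only [hip] at h; omega
      congr 1
      apply Fin.ext
      simp only [hip]
      omega
    · exfalso
      rw [Bf_nonleaf hT r v hv hzl] at c3
      have := Yc_lt_negdep hT r hk v hv hleaf hleaves hr hplanar i z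
      linarith
  · rintro rfl
    have hRi : Rmx hT r v (v i) = i.val := Rmx_leaf hT r hk v hv hleaf hleaves hr hplanar i
    have hRp : Rmx hT r v (v ip) = ip.val := Rmx_leaf hT r hk v hv hleaf hleaves hr hplanar ip
    refine ⟨?_, le_refl _, ?_, ?_⟩
    · rw [xi_le_xi_iff hT r hk v hv hleaf hleaves hr hplanar]
      left
      rw [hRi, hRp]
      simp only [hip]
      omega
    · rw [Bf_leaf hT r v hv ip]
      rw [Yc_mono v hv]
      simp only [hip]
      omega
    · rw [Tf_leaf hT r v hv ip]
      have hY := Yc_lt_negdep hT r hk v hv hleaf hleaves hr hplanar i (v ip)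
      have h0 : (0 : ℝ) ≤ (dep hT r (v ip) : ℝ) := Nat.cast_nonneg _
      split_ifs with h
      · linarith
      · linarith

/-- M3 : hits by the top arm of the gamma-shaped first leaf -/
lemma M3 {z : V} (hne : z ≠ v ⟨0, by omega⟩) :
    Hitt hT r v (v ⟨0, by omega⟩) z ↔
      z = v ⟨k - 1, Nat.sub_lt (Nat.lt_of_lt_of_le (Nat.succ_pos 2) hk) Nat.one_pos⟩ := by
  set i0 : Fin k := ⟨0, by omega⟩ with hi0
  set lst : Fin k := ⟨k - 1, Nat.sub_lt (Nat.lt_of_lt_of_le (Nat.succ_pos 2) hk) Nat.one_pos⟩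
    with hlst
  rw [Hitt, Lff_leaf hT r v hv i0, Rtf_leaf0 hT r v hv (by simp [hi0]), Hf_leaf hT r v hv i0,
    if_pos (by simp [hi0]), if_pos (by simp [hi0])]
  constructor
  · rintro ⟨c1, c2, c3, c4⟩
    by_cases hzl : ∃ j, v j = z
    · obtain ⟨j, rfl⟩ := hzl
      rw [Tf_leaf hT r v hv j] at c4
      have hj : j.val = 0 ∨ j.val = k - 1 := by
        by_contra hcon
        rw [if_neg hcon] at c4
        have h1 : 1 ≤ dep hT r (v j) := dep_leaf_pos hT r hk v hv hleaf hleaves hr hplanar j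
        have : (1 : ℝ) ≤ (dep hT r (v j) : ℝ) := by exact_mod_cast h1
        linarith
      rcases hj with hj | hj
      · exfalso; apply hne; congr 1; apply Fin.ext; simp [hi0]; omega
      · congr 1; apply Fin.ext; simp [hlst]; omega
    · exfalso
      have hzr : z = r := by
        rw [Tf_nonleaf hT r v hv hzl] at c4
        have : (dep hT r z : ℝ) ≤ 0 := by linarith
        have h0 : dep hT r z = 0 := by exact_mod_cast le_antisymm this (Nat.cast_nonneg _)
        exact (dep_eq_zero_iff hT r).mp h0
      rw [hzr, xi_r hT r hk v hv hleaf hleaves hr hplanar] at c1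
      norm_num at c1
  · rintro rfl
    refine ⟨?_, ?_, ?_, ?_⟩
    · rw [xi_vlast hT r hk v hv hleaf hleaves hr hplanar]
    · rw [xi_le_xi_iff hT r hk v hv hleaf hleaves hr hplanar]
      left
      rw [Rmx_leaf hT r hk v hv hleaf hleaves hr hplanar,
        Rmx_leaf hT r hk v hv hleaf hleaves hr hplanar]
      simp [hi0, hlst]
      omega
    · rw [Bf_leaf hT r v hv lst]
      have := Yc_lt_negdep hT r hk v hv hleaf hleaves hr hplanar lst r
      rw [dep_r] at this
      simp only [Nat.cast_zero, neg_zero] at this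
      linarith
    · rw [Tf_leaf hT r v hv lst, if_pos (by simp [hlst])]


/-! ### stage 6a : set algebra of the shapes -/

lemma Rmx_ne {u z : V} (hdep : dep hT r u = dep hT r z) (hne : u ≠ z) :
    Rmx hT r v u ≠ Rmx hT r v z := by
  intro h
  obtain ⟨iu, hiu, hiue⟩ := Rmx_mem hT r hk v hv hleaf hleaves hr hplanar u
  obtain ⟨iz, hiz, hize⟩ := Rmx_mem hT r hk v hv hleaf hleaves hr hplanar z
  have : iu = iz := Fin.ext (by omega)
  exact Sf_disjoint hT r v hdep hne hiu (this ▸ hiz)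

lemma xi_inj {u z : V} (hne : u ≠ z) : xi hT r v u ≠ xi hT r v z := by
  intro h
  have h1 : xi hT r v u ≤ xi hT r v z := le_of_eq h
  have h2 : xi hT r v z ≤ xi hT r v u := le_of_eq h.symm
  rcases (xi_le_xi_iff hT r hk v hv hleaf hleaves hr hplanar).mp h1 with ha | ha <;>
    rcases (xi_le_xi_iff hT r hk v hv hleaf hleaves hr hplanar).mp h2 with hb | hb
  · omega
  · omega
  · omega
  · -- Rmx equal and dep equal
    have hd : dep hT r u = dep hT r z := by omega
    exact Rmx_ne hT r hk v hv hleaf hleaves hr hplanar hd hne ha.1.symm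

/-- heights are distinct unless both non-leaves of equal depth -/
lemma Hf_eq_cases {u z : V} (hne : u ≠ z) (h : Hf hT r v u = Hf hT r v z) :
    (¬∃ i : Fin k, v i = u) ∧ (¬∃ i : Fin k, v i = z) ∧ dep hT r u = dep hT r z := by
  have hone : ∀ w : V, (0:ℝ) ≤ (dep hT r w : ℝ) := fun w => Nat.cast_nonneg _
  by_cases hul : ∃ i, v i = u <;> by_cases hzl : ∃ i, v i = z
  · obtain ⟨i, rfl⟩ := hul; obtain ⟨j, rfl⟩ := hzl
    rw [Hf_leaf hT r v hv i, Hf_leaf hT r v hv j] at h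
    exfalso
    have hY0 : ∀ m : Fin k, Yc (Fintype.card V) m < 1 := by
      intro m
      have := Yc_lt_negdep hT r hk v hv hleaf hleaves hr hplanar m r
      rw [dep_r] at this
      simp only [Nat.cast_zero, neg_zero] at this
      linarith
    split_ifs at h with h1 h2 h2
    · exact hne (by congr 1; exact Fin.ext (by omega))
    · exact absurd h.symm (ne_of_lt (hY0 j))
    · exact absurd h (ne_of_lt (hY0 i))
    · have : i = j := by
        have h1 : i.val ≤ j.val := (Yc_mono v hv).mp (le_of_eq h)
        have h2 : j.val ≤ i.val := (Yc_mono v hv).mp (le_of_eq h.symm)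
        exact Fin.ext (by omega)
      exact hne (by rw [this])
  · obtain ⟨i, rfl⟩ := hul
    rw [Hf_leaf hT r v hv i, Hf_nonleaf hT r v hv hzl] at h
    exfalso
    split_ifs at h with h1
    · have := hone z; linarith
    · have := Yc_lt_negdep hT r hk v hv hleaf hleaves hr hplanar i z
      linarith
  · obtain ⟨j, rfl⟩ := hzl
    rw [Hf_nonleaf hT r v hv hul, Hf_leaf hT r v hv j] at h
    exfalso
    split_ifs at h with h1
    · have := hone u; linarith
    · have := Yc_lt_negdep hT r hk v hv hleaf hleaves hr hplanar j u
      linarith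
  · refine ⟨hul, hzl, ?_⟩
    rw [Hf_nonleaf hT r v hv hul, Hf_nonleaf hT r v hv hzl] at h
    have : (dep hT r u : ℝ) = (dep hT r z : ℝ) := by linarith
    exact_mod_cast this

lemma HH_empty {u z : V} (hne : u ≠ z) :
    (Set.Icc (Lff hT r v u) (Rtf hT r v u) ×ˢ ({Hf hT r v u} : Set ℝ)) ∩
      (Set.Icc (Lff hT r v z) (Rtf hT r v z) ×ˢ ({Hf hT r v z} : Set ℝ)) = ∅ := by
  by_cases hH : Hf hT r v u = Hf hT r v z
  · obtain ⟨hul, hzl, hdep⟩ := Hf_eq_cases hT r hk v hv hleaf hleaves hr hplanar hne hH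
    rw [Lff_nonleaf hT r v hv hul, Lff_nonleaf hT r v hv hzl,
      Rtf_nonleaf hT r v hv hul, Rtf_nonleaf hT r v hv hzl]
    apply HalinNum.hh_empty_sep
    rcases sep_same_dep hT r hk v hv hleaf hleaves hr hplanar hul hzl hdep hne with h | h
    · left
      rw [Rtt_lt_xi_iff hT r hk v hv hleaf hleaves hr hplanar]
      exact Or.inl h
    · right
      rw [Rtt_lt_xi_iff hT r hk v hv hleaf hleaves hr hplanar]
      exact Or.inl h
  · exact HalinNum.hh_empty_ne hH _ _

open scoped Classical in
lemma shape_inter_eq {u z : V} (hne : u ≠ z) :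
    shape hT r v u ∩ shape hT r v z =
      (if Hitt hT r v z u then {(xi hT r v u, Hf hT r v z)} else ∅) ∪
        (if Hitt hT r v u z then {(xi hT r v z, Hf hT r v u)} else ∅) := by
  rw [shape, shape, Set.union_inter_distrib_right, Set.inter_union_distrib_left,
    Set.inter_union_distrib_left]
  rw [HalinNum.vv_empty (xi_inj hT r hk v hv hleaf hleaves hr hplanar hne) _ _]
  rw [HH_empty hT r hk v hv hleaf hleaves hr hplanar hne]
  have e1 : ({xi hT r v u} : Set ℝ) ×ˢ Set.Icc (Bf hT r v u) (Tf hT r v u) ∩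
      Set.Icc (Lff hT r v z) (Rtf hT r v z) ×ˢ ({Hf hT r v z} : Set ℝ) =
      (if Hitt hT r v z u then {(xi hT r v u, Hf hT r v z)} else ∅) := by
    rw [Set.inter_comm, HalinNum.cross_inter]
    congr 1
  have e2 : Set.Icc (Lff hT r v u) (Rtf hT r v u) ×ˢ ({Hf hT r v u} : Set ℝ) ∩
      ({xi hT r v z} : Set ℝ) ×ˢ Set.Icc (Bf hT r v z) (Tf hT r v z) =
      (if Hitt hT r v u z then {(xi hT r v z, Hf hT r v u)} else ∅) := by
    rw [HalinNum.cross_inter]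
    congr 1
  rw [e1, e2]
  simp

/-! positivity of the arm lengths -/

lemma Bf_lt_Tf (u : V) : Bf hT r v u < Tf hT r v u := by
  by_cases hul : ∃ i, v i = u
  · obtain ⟨i, rfl⟩ := hul
    rw [Bf_leaf hT r v hv i, Tf_leaf hT r v hv i]
    have h1 := Yc_lt_negdep hT r hk v hv hleaf hleaves hr hplanar i (v i)
    have h2 := Yc_lt_negdep hT r hk v hv hleaf hleaves hr hplanar i r
    rw [dep_r] at h2
    simp only [Nat.cast_zero, neg_zero] at h2
    split_ifs with h
    · linarith
    · linarith
  · rw [Bf_nonleaf hT r v hv hul, Tf_nonleaf hT r v hv hul]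
    linarith

lemma Lff_lt_Rtf (u : V) : Lff hT r v u < Rtf hT r v u := by
  by_cases hul : ∃ i, v i = u
  · obtain ⟨i, rfl⟩ := hul
    by_cases hi0 : i.val = 0
    · rw [Lff_leaf hT r v hv i, Rtf_leaf0 hT r v hv hi0, if_pos hi0, xi,
        Rmx_leaf hT r hk v hv hleaf hleaves hr hplanar, hi0]
      have h1 : (2⁻¹ : ℝ) ^ (dep hT r (v i)) ≤ 1 := HalinNum.half_pow_le_one _
      have h2 : (3 : ℝ) ≤ (k : ℝ) := by exact_mod_cast hk
      push_cast
      linarith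
    · rw [Lff_leaf hT r v hv i, Rtf_leaf hT r v hv hi0, if_neg hi0]
      set ip : Fin k := ⟨i.val - 1, Nat.lt_of_le_of_lt (Nat.sub_le _ _) i.isLt⟩ with hip
      have hne : v i ≠ v ip := by
        intro h
        have := hv h
        rw [Fin.ext_iff] at this
        simp only [hip] at this
        omega
      have hle : xi hT r v (v i) ≤ xi hT r v (v ip) := by
        rw [xi_le_xi_iff hT r hk v hv hleaf hleaves hr hplanar]
        left
        rw [Rmx_leaf hT r hk v hv hleaf hleaves hr hplanar,
          Rmx_leaf hT r hk v hv hleaf hleaves hr hplanar]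
        simp only [hip]
        omega
      exact lt_of_le_of_ne hle (xi_inj hT r hk v hv hleaf hleaves hr hplanar hne)
  · rw [Lff_nonleaf hT r v hv hul, Rtf_nonleaf hT r v hv hul]
    have h : rhx hT r v u ≤ Rmx hT r v u := rhx_le_Rmx hT r hk v hv hleaf hleaves hr hplanar hul
    have hkey : (rhx hT r v u : ℝ) + (2⁻¹ : ℝ) ^ (dep hT r u + 1) <
        (Rmx hT r v u : ℝ) + (2⁻¹ : ℝ) ^ (dep hT r u) := by
      rcases Nat.eq_or_lt_of_le h with h' | h'
      · have hq : (2⁻¹ : ℝ) ^ (dep hT r u + 1) < (2⁻¹ : ℝ) ^ (dep hT r u) :=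
          HalinNum.half_pow_lt_iff.mpr (by omega)
        rw [h']
        linarith
      · have h1 : (rhx hT r v u : ℝ) + 1 ≤ (Rmx hT r v u : ℝ) := by
          exact_mod_cast Nat.succ_le_of_lt h'
        have h2 := HalinNum.half_pow_le_one (dep hT r u + 1)
        have h3 := HalinNum.half_pow_pos (dep hT r u)
        linarith
    rw [xi, Rtt]
    linarith


/-! ### stage 6b : assembly -/

lemma Hitt_iff {u z : V} (hne : z ≠ u) :
    Hitt hT r v u z ↔
      ((¬∃ i : Fin k, v i = u) ∧ z ∈ chl hT r u) ∨
      (∃ i : Fin k, i.val ≠ 0 ∧ u = v i ∧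
        z = v ⟨i.val - 1, Nat.lt_of_le_of_lt (Nat.sub_le _ _) i.isLt⟩) ∨
      (u = v ⟨0, by omega⟩ ∧
        z = v ⟨k - 1, Nat.sub_lt (Nat.lt_of_lt_of_le (Nat.succ_pos 2) hk) Nat.one_pos⟩) := by
  by_cases hul : ∃ i, v i = u
  · obtain ⟨i, rfl⟩ := hul
    by_cases hi0 : i.val = 0
    · have hieq : i = ⟨0, by omega⟩ := Fin.ext hi0
      constructor
      · intro hh
        rw [hieq] at hh hne
        have := (M3 hT r hk v hv hleaf hleaves hr hplanar hne).mp hh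
        exact Or.inr (Or.inr ⟨by rw [hieq], this⟩)
      · rintro (⟨hnl, _⟩ | ⟨j, hj0, hje, _⟩ | ⟨_, hzl⟩)
        · exact absurd ⟨i, rfl⟩ hnl
        · exact absurd (show j.val = 0 by rw [← (hv hje : i = j)]; exact hi0) hj0
        · rw [hieq] at hne ⊢
          exact (M3 hT r hk v hv hleaf hleaves hr hplanar hne).mpr hzl
    · constructor
      · intro hh
        have := (M2 hT r hk v hv hleaf hleaves hr hplanar hi0 hne).mp hh
        exact Or.inr (Or.inl ⟨i, hi0, rfl, this⟩)
      · rintro (⟨hnl, _⟩ | ⟨j, hj0, hje, hzj⟩ | ⟨hu0, _⟩)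
        · exact absurd ⟨i, rfl⟩ hnl
        · have hij : i = j := hv hje
          subst hij
          exact (M2 hT r hk v hv hleaf hleaves hr hplanar hi0 hne).mpr hzj
        · exact absurd (by rw [(hv hu0 : i = ⟨0, by omega⟩)]) hi0
  · rw [M1 hT r hk v hv hleaf hleaves hr hplanar hul hne]
    constructor
    · intro h; exact Or.inl ⟨hul, h⟩
    · rintro (⟨_, h⟩ | ⟨j, _, hje, _⟩ | ⟨hje, _⟩)
      · exact h
      · exact absurd ⟨j, hje.symm⟩ hul
      · exact absurd ⟨⟨0, by omega⟩, hje.symm⟩ hul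

lemma no_double {u z : V} (hne : z ≠ u) :
    ¬(Hitt hT r v u z ∧ Hitt hT r v z u) := by
  rintro ⟨h1, h2⟩
  rw [Hitt_iff hT r hk v hv hleaf hleaves hr hplanar hne] at h1
  rw [Hitt_iff hT r hk v hv hleaf hleaves hr hplanar (Ne.symm hne)] at h2
  rcases h1 with ⟨hnl1, hc1⟩ | ⟨i, hi0, hui, hzi⟩ | ⟨hu0, hzl⟩ <;>
    rcases h2 with ⟨hnl2, hc2⟩ | ⟨j, hj0, hzj, huj⟩ | ⟨hz0, hul⟩
  · have d1 := ((mem_chl hT r).mp hc1).2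
    have d2 := ((mem_chl hT r).mp hc2).2
    omega
  · exact hnl1 ⟨_, huj.symm⟩
  · exact hnl1 ⟨_, hul.symm⟩
  · exact hnl2 ⟨_, hzi.symm⟩
  · have e1 : i.val = j.val - 1 := by
      have := hv (hui.symm.trans huj); rw [Fin.ext_iff] at this; exact this
    have e2 : j.val = i.val - 1 := by
      have := hv (hzj.symm.trans hzi); rw [Fin.ext_iff] at this; exact this
    omega
  · have e1 : i.val - 1 = 0 := by
      have := hv (hzi.symm.trans hz0); rw [Fin.ext_iff] at this; exact this
    have e2 : i.val = k - 1 := by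
      have := hv (hui.symm.trans hul); rw [Fin.ext_iff] at this; exact this
    omega
  · exact hnl2 ⟨_, hzl.symm⟩
  · have e1 : j.val - 1 = 0 := by
      have := hv (huj.symm.trans hu0); rw [Fin.ext_iff] at this; exact this
    have e2 : j.val = k - 1 := by
      have := hv (hzj.symm.trans hzl); rw [Fin.ext_iff] at this; exact this
    omega
  · have : (0 : ℕ) = k - 1 := by
      have := hv (hu0.symm.trans hul); rw [Fin.ext_iff] at this; exact this
    omega

omit hT hk hleaf hleaves hr hplanar in
lemma fin_add_one_val {i : Fin k} (hk1 : 1 < k) (h : i.val + 1 < k) :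
    i + (⟨1, hk1⟩ : Fin k) = ⟨i.val + 1, h⟩ := by
  apply Fin.ext
  rw [Fin.val_add]
  exact Nat.mod_eq_of_lt h

omit hT hleaf hleaves hr hplanar in
lemma fin_add_one_last :
    (⟨k - 1, Nat.sub_lt (Nat.lt_of_lt_of_le (Nat.succ_pos 2) hk) Nat.one_pos⟩ : Fin k) +
      (⟨1, (Nat.lt_of_lt_of_le (Nat.succ_lt_succ (Nat.succ_pos 1)) hk)⟩ : Fin k) = ⟨0, by omega⟩ := by
  apply Fin.ext
  rw [Fin.val_add]
  show (k - 1 + 1) % k = 0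
  have : k - 1 + 1 = k := by omega
  rw [this, Nat.mod_self]

lemma par_nonleaf {u z : V} (hadj : T.Adj u z) (hpz : par hT r z = u) :
    ¬∃ i : Fin k, v i = u := by
  rintro ⟨i, rfl⟩
  have hur : v i ≠ r := r_not_leaf hT r hk v hv hleaf hleaves hr hplanar i
  have hzr : z ≠ r := by
    intro h
    rw [h] at hadj
    rw [h, par, dif_pos rfl] at hpz
    rw [← hpz] at hadj
    exact hadj.ne rfl
  have hznbr : z = par hT r (v i) := unique_nbr (hleaf i) hadj (par_adj hT r hur)
  have d1 : dep hT r z = dep hT r (v i) + 1 := by rw [dep_par hT r hzr, hpz]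
  have d2 : dep hT r (v i) = dep hT r z + 1 := by rw [dep_par hT r hur, ← hznbr]
  omega

lemma adj_to_hit {u z : V} (hne : u ≠ z) (hadj : T.Adj u z) :
    Hitt hT r v u z ∨ Hitt hT r v z u := by
  rcases adj_par_or hT r hadj with h | h
  · left
    rw [Hitt_iff hT r hk v hv hleaf hleaves hr hplanar (Ne.symm hne)]
    left
    refine ⟨par_nonleaf hT r hk v hv hleaf hleaves hr hplanar hadj h, ?_⟩
    rw [mem_chl hT r]
    have hzr : z ≠ r := by
      intro hz
      rw [hz] at hadj
      rw [hz, par, dif_pos rfl] at h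
      rw [← h] at hadj
      exact hadj.ne rfl
    exact ⟨hadj, by rw [dep_par hT r hzr, h]⟩
  · right
    rw [Hitt_iff hT r hk v hv hleaf hleaves hr hplanar hne]
    left
    refine ⟨par_nonleaf hT r hk v hv hleaf hleaves hr hplanar hadj.symm h, ?_⟩
    rw [mem_chl hT r]
    have hur : u ≠ r := by
      intro hu
      rw [hu] at hadj
      rw [hu, par, dif_pos rfl] at h
      rw [← h] at hadj
      exact hadj.ne rfl
    exact ⟨hadj.symm, by rw [dep_par hT r hur, h]⟩

lemma hit_or_iff {u z : V} (hne : u ≠ z) :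
    (Hitt hT r v u z ∨ Hitt hT r v z u) ↔
      (T.Adj u z ∨ ∃ i : Fin k, s(u, z) = s(v i, v (i + (⟨1, (Nat.lt_of_lt_of_le (Nat.succ_lt_succ (Nat.succ_pos 1)) hk)⟩ : Fin k)))) := by
  constructor
  · intro hh
    have key : ∀ a b : V, Hitt hT r v a b → b ≠ a →
        T.Adj a b ∨ ∃ i : Fin k, s(a, b) = s(v i, v (i + (⟨1, by omega⟩ : Fin k))) := by
      intro a b hab hba
      rw [Hitt_iff hT r hk v hv hleaf hleaves hr hplanar hba] at hab
      rcases hab with ⟨_, hc⟩ | ⟨i, hi0, hai, hbi⟩ | ⟨ha0, hbl⟩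
      · exact Or.inl ((mem_chl hT r).mp hc).1
      · right
        set ip : Fin k := ⟨i.val - 1, Nat.lt_of_le_of_lt (Nat.sub_le _ _) i.isLt⟩ with hip
        refine ⟨ip, ?_⟩
        have : ip + (⟨1, by omega⟩ : Fin k) = i := by
          apply Fin.ext
          rw [Fin.val_add]
          show (i.val - 1 + 1) % k = i.val
          have h1 : i.val - 1 + 1 = i.val := by omega
          rw [h1, Nat.mod_eq_of_lt i.isLt]
        rw [this, hai, hbi, Sym2.eq_swap]
      · right
        refine ⟨⟨k - 1, by omega⟩, ?_⟩
        have : (⟨k - 1, by omega⟩ : Fin k) + (⟨1, by omega⟩ : Fin k) = ⟨0, by omega⟩ :=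
          fin_add_one_last hk v hv
        rw [this, ha0, hbl, Sym2.eq_swap]
    rcases hh with hh | hh
    · exact key u z hh (Ne.symm hne)
    · rcases key z u hh hne with h | ⟨i, hi⟩
      · exact Or.inl h.symm
      · exact Or.inr ⟨i, by rwa [Sym2.eq_swap] at hi⟩
  · rintro (hadj | ⟨i, he⟩)
    · exact adj_to_hit hT r hk v hv hleaf hleaves hr hplanar hne hadj
    · rw [Sym2.eq_iff] at he
      have main : ∀ a b : V, a = v i → b = v (i + (⟨1, by omega⟩ : Fin k)) → a ≠ b →
          Hitt hT r v b a := by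
        intro a b ha hb hab
        by_cases hik : i.val = k - 1
        · have hieq : i = ⟨k - 1, Nat.sub_lt (Nat.lt_of_lt_of_le (Nat.succ_pos 2) hk)
              Nat.one_pos⟩ := Fin.ext hik
          have : i + (⟨1, by omega⟩ : Fin k) = ⟨0, by omega⟩ := by
            rw [hieq]; exact fin_add_one_last hk v hv
          rw [this] at hb
          rw [Hitt_iff hT r hk v hv hleaf hleaves hr hplanar (u := b) (z := a) hab]
          exact Or.inr (Or.inr ⟨hb, by rw [ha, hieq]⟩)
        · have hlt : i.val + 1 < k := by
            have := i.isLt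
            omega
          have hadd : i + (⟨1, by omega⟩ : Fin k) = ⟨i.val + 1, hlt⟩ :=
            fin_add_one_val v hv (by omega) hlt
          rw [hadd] at hb
          rw [Hitt_iff hT r hk v hv hleaf hleaves hr hplanar (u := b) (z := a) hab]
          refine Or.inr (Or.inl ⟨⟨i.val + 1, hlt⟩, by simp, hb, ?_⟩)
          rw [ha]
          congr 1
      rcases he with ⟨h1, h2⟩ | ⟨h1, h2⟩
      · exact Or.inr (main u z h1 h2 hne)
      · exact Or.inl (main z u h2 h1 (Ne.symm hne))

open scoped Classical in
lemma inter_nonempty_iff {u z : V} (hne : u ≠ z) :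
    (shape hT r v u ∩ shape hT r v z).Nonempty ↔
      (Hitt hT r v u z ∨ Hitt hT r v z u) := by
  rw [shape_inter_eq hT r hk v hv hleaf hleaves hr hplanar hne]
  split_ifs with h1 h2 h2 <;> simp [h1, h2] <;> tauto

open scoped Classical in
lemma inter_subsingleton {u z : V} (hne : u ≠ z) :
    (shape hT r v u ∩ shape hT r v z).Subsingleton := by
  rw [shape_inter_eq hT r hk v hv hleaf hleaves hr hplanar hne]
  by_cases h1 : Hitt hT r v z u <;> by_cases h2 : Hitt hT r v u z
  · exact absurd ⟨h2, h1⟩ (no_double hT r hk v hv hleaf hleaves hr hplanar (Ne.symm hne))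
  · rw [if_pos h1, if_neg h2, Set.union_empty]
    exact Set.subsingleton_singleton
  · rw [if_neg h1, if_pos h2, Set.empty_union]
    exact Set.subsingleton_singleton
  · rw [if_neg h1, if_neg h2, Set.union_empty]
    exact Set.subsingleton_empty

lemma Yc_lt_one (i : Fin k) : Yc (Fintype.card V) i < 1 := by
  have := Yc_lt_negdep hT r hk v hv hleaf hleaves hr hplanar i r
  rw [dep_r] at this
  simp only [Nat.cast_zero, neg_zero] at this
  linarith

lemma shape_gamma :
    IsGammaShape (shape hT r v (v ⟨0, by omega⟩)) := by
  set i0 : Fin k := ⟨0, by omega⟩ with hi0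
  refine ⟨xi hT r v (v i0), 1, 1 - Yc (Fintype.card V) i0, xi hT r v (v i0) - 2⁻¹, ?_, ?_, ?_⟩
  · have := Yc_lt_one hT r hk v hv hleaf hleaves hr hplanar i0
    linarith
  · have := Lff_lt_Rtf hT r hk v hv hleaf hleaves hr hplanar (v i0)
    rw [Lff_leaf hT r v hv i0, Rtf_leaf0 hT r v hv (by simp [hi0]),
      if_pos (by simp [hi0] : i0.val = 0)] at this
    linarith
  · rw [shape, GammaShape, Bf_leaf hT r v hv i0, Tf_leaf hT r v hv i0,
      Hf_leaf hT r v hv i0, Lff_leaf hT r v hv i0, Rtf_leaf0 hT r v hv (by simp [hi0]),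
      if_pos (by simp [hi0] : i0.val = 0), if_pos (by simp [hi0] : i0.val = 0),
      if_pos (Or.inl (by simp [hi0] : i0.val = 0))]
    have e1 : (1 : ℝ) - (1 - Yc (Fintype.card V) i0) = Yc (Fintype.card V) i0 := by ring
    have e2 : xi hT r v (v i0) - (xi hT r v (v i0) - 2⁻¹) = 2⁻¹ := by ring
    rw [e1, e2]

lemma shape_L {u : V} (hne : u ≠ v ⟨0, by omega⟩) : IsLShape (shape hT r v u) := by
  have hHfBf : Hf hT r v u = Bf hT r v u ∧ Lff hT r v u = xi hT r v u := by
    by_cases hul : ∃ i, v i = u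
    · obtain ⟨i, rfl⟩ := hul
      have hi0 : i.val ≠ 0 := by
        intro h
        exact hne (by congr 1; exact Fin.ext h)
      rw [Hf_leaf hT r v hv i, Bf_leaf hT r v hv i, Lff_leaf hT r v hv i,
        if_neg hi0, if_neg hi0]
      exact ⟨rfl, rfl⟩
    · rw [Hf_nonleaf hT r v hv hul, Bf_nonleaf hT r v hv hul, Lff_nonleaf hT r v hv hul]
      exact ⟨rfl, rfl⟩
  refine ⟨xi hT r v u, Bf hT r v u, Tf hT r v u - Bf hT r v u,
    Rtf hT r v u - xi hT r v u, ?_, ?_, ?_⟩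
  · have := Bf_lt_Tf hT r hk v hv hleaf hleaves hr hplanar u
    linarith
  · have := Lff_lt_Rtf hT r hk v hv hleaf hleaves hr hplanar u
    rw [hHfBf.2] at this
    linarith
  · rw [shape, LShape, hHfBf.1, hHfBf.2]
    have e1 : Bf hT r v u + (Tf hT r v u - Bf hT r v u) = Tf hT r v u := by ring
    have e2 : xi hT r v u + (Rtf hT r v u - xi hT r v u) = Rtf hT r v u := by ring
    rw [e1, e2]


end HalinAux2

/-- Every Halin graph has an `{L, ⌐}`-representation in which exactly one vertex uses a
⌐-shape. -/
theorem halin_graph_has_L_Gamma_representation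
    {V : Type*} [Fintype V] [DecidableEq V]
    (T : SimpleGraph V) [DecidableRel T.Adj] (hT : T.IsTree)
    (k : ℕ) (hk : 3 ≤ k)
    (v : Fin k → V) (hv : Function.Injective v)
    (hleaf : ∀ i : Fin k, T.degree (v i) = 1)
    (hleaves : ∀ u : V, T.degree u = 1 → ∃ i : Fin k, u = v i)
    (r : V) (hr : T.Adj (v ⟨k - 1, by omega⟩) r)
    -- the enumeration of the leaves is `T`-planar with respect to `r`
    (hplanar : ∀ u : V, u ≠ r → ∀ i j l : Fin k, i ≤ j → j ≤ l →
      OnPath T u (v i) r → OnPath T u (v l) r → OnPath T u (v j) r)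
    (G : SimpleGraph V)
    (hG : G = T ⊔ SimpleGraph.fromEdgeSet
      {e | ∃ i : Fin k, e = s(v i, v (i + (⟨1, by omega⟩ : Fin k)))}) :
    ∃ c : V → Set (ℝ × ℝ), ∃ w : V,
      IsGammaShape (c w) ∧ (∀ u : V, u ≠ w → IsLShape (c u)) ∧
      ∀ u u' : V, u ≠ u' →
        (((c u ∩ c u').Nonempty ↔ G.Adj u u') ∧ (c u ∩ c u').Subsingleton) := by
  classical
  refine ⟨HalinAux2.shape hT r v, v ⟨0, by omega⟩, ?_, ?_, ?_⟩
  · exact HalinAux2.shape_gamma hT r hk v hv hleaf hleaves hr hplanar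
  · intro u hu
    exact HalinAux2.shape_L hT r hk v hv hleaf hleaves hr hplanar hu
  · intro u u' hne
    constructor
    · rw [HalinAux2.inter_nonempty_iff hT r hk v hv hleaf hleaves hr hplanar hne,
        HalinAux2.hit_or_iff hT r hk v hv hleaf hleaves hr hplanar hne, hG]
      simp only [SimpleGraph.sup_adj, SimpleGraph.fromEdgeSet_adj, Set.mem_setOf_eq]
      constructor
      · rintro (h | ⟨i, hi⟩)
        · exact Or.inl h
        · exact Or.inr ⟨⟨i, hi⟩, hne⟩
      · rintro (h | ⟨⟨i, hi⟩, _⟩)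
        · exact Or.inl h
        · exact Or.inr ⟨i, hi⟩
    · exact HalinAux2.inter_subsingleton hT r hk v hv hleaf hleaves hr hplanar hne
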